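/- In the braid group B_3, with band generators a_{21}, a_{31}, a_{32} and δ = a_{32} a_{21}, every element can be written in the form δ^k A where k is an integer and A is a positive word in the band generators that is not of the form δ A' for any positive word A'. -/

import Mathlib

/-- The braid relation of `B₃`: `a₁ a₂ a₁ = a₂ a₁ a₂`. -/
def braid3Rels : Set (FreeGroup (Fin 2)) :=
  {FreeGroup.of 0 * FreeGroup.of 1 * FreeGroup.of 0 *
    (FreeGroup.of 1 * FreeGroup.of 0 * FreeGroup.of 1)⁻¹}

/-- The braid group `B₃` on three strands. -/
abbrev B3 := PresentedGroup braid3Rels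

/-- The Artin generator `a₁` of `B₃`. -/
def a1 : B3 := PresentedGroup.of 0

/-- The Artin generator `a₂` of `B₃`. -/
def a2 : B3 := PresentedGroup.of 1

/-- The band generator `a_{21} = a₁`. -/
def b21 : B3 := a1

/-- The band generator `a_{32} = a₂`. -/
def b32 : B3 := a2

/-- The band generator `a_{31} = a₂ a₁ a₂⁻¹`. -/
def b31 : B3 := a2 * a1 * a2⁻¹

/-- The Birman-Ko-Lee Garside element `δ = a_{32} a_{21}`. -/
def δ3 : B3 := b32 * b21

namespace B3aux

theorem braid : a1 * a2 * a1 = a2 * a1 * a2 := by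
  have h : (PresentedGroup.mk braid3Rels)
      (FreeGroup.of 0 * FreeGroup.of 1 * FreeGroup.of 0 *
        (FreeGroup.of 1 * FreeGroup.of 0 * FreeGroup.of 1)⁻¹) = 1 := by
    apply (QuotientGroup.eq_one_iff _).mpr
    exact Subgroup.subset_normalClosure rfl
  simp only [map_mul, map_inv] at h
  have := mul_eq_one_iff_eq_inv.mp h
  simpa [a1, a2, PresentedGroup.of, inv_inv] using this

abbrev M : Submonoid B3 := Submonoid.closure {b21, b31, b32}

theorem hb21 : b21 ∈ M := Submonoid.subset_closure (by simp)
theorem hb31 : b31 ∈ M := Submonoid.subset_closure (by simp)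
theorem hb32 : b32 ∈ M := Submonoid.subset_closure (by simp)

theorem d_b21 : δ3 * b21 * δ3⁻¹ = b31 := by
  simp only [δ3, b21, b31, b32]; group

theorem d_b31 : δ3 * b31 * δ3⁻¹ = b32 := by
  simp only [δ3, b21, b31, b32]
  calc a2 * a1 * (a2 * a1 * a2⁻¹) * (a2 * a1)⁻¹
      = a2 * (a1 * a2 * a1) * (a2⁻¹ * a1⁻¹ * a2⁻¹) := by group
    _ = a2 * (a2 * a1 * a2) * (a2⁻¹ * a1⁻¹ * a2⁻¹) := by rw [braid]
    _ = a2 := by group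

theorem d_b32 : δ3 * b32 * δ3⁻¹ = b21 := by
  simp only [δ3, b21, b31, b32]
  calc a2 * a1 * a2 * (a2 * a1)⁻¹ = a1 * a2 * a1 * (a2 * a1)⁻¹ := by rw [braid]
    _ = a1 := by group

theorem di_b31 : δ3⁻¹ * b31 * δ3 = b21 := by
  rw [← d_b21]; group

theorem di_b32 : δ3⁻¹ * b32 * δ3 = b31 := by
  rw [← d_b31]; group

theorem di_b21 : δ3⁻¹ * b21 * δ3 = b32 := by
  rw [← d_b32]; group

theorem conj_mem : ∀ A ∈ M, δ3 * A * δ3⁻¹ ∈ M := by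
  intro A hA
  induction hA using Submonoid.closure_induction with
  | one => simpa using (M.one_mem)
  | mem x hx =>
    rcases hx with h | h | h <;> subst h
    · rw [d_b21]; exact hb31
    · rw [d_b31]; exact hb32
    · rw [d_b32]; exact hb21
  | mul x y hx hy ihx ihy =>
    have : δ3 * (x * y) * δ3⁻¹ = (δ3 * x * δ3⁻¹) * (δ3 * y * δ3⁻¹) := by group
    rw [this]; exact M.mul_mem ihx ihy

theorem conj_inv_mem : ∀ A ∈ M, δ3⁻¹ * A * δ3 ∈ M := by
  intro A hA
  induction hA using Submonoid.closure_induction with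
  | one => simpa using (M.one_mem)
  | mem x hx =>
    rcases hx with h | h | h <;> subst h
    · rw [di_b21]; exact hb32
    · rw [di_b31]; exact hb21
    · rw [di_b32]; exact hb31
  | mul x y hx hy ihx ihy =>
    have : δ3⁻¹ * (x * y) * δ3 = (δ3⁻¹ * x * δ3) * (δ3⁻¹ * y * δ3) := by group
    rw [this]; exact M.mul_mem ihx ihy

theorem swap : ∀ (k : ℤ), ∀ A ∈ M, ∃ B ∈ M, A * δ3 ^ k = δ3 ^ k * B := by
  intro k
  induction k using Int.induction_on with
  | zero => intro A hA; exact ⟨A, hA, by simp⟩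
  | succ k ih =>
    intro A hA
    obtain ⟨B, hB, hAB⟩ := ih A hA
    refine ⟨δ3⁻¹ * B * δ3, conj_inv_mem B hB, ?_⟩
    rw [zpow_add_one]
    calc A * (δ3 ^ (k:ℤ) * δ3) = (A * δ3 ^ (k:ℤ)) * δ3 := by group
      _ = δ3 ^ (k:ℤ) * B * δ3 := by rw [hAB]
      _ = δ3 ^ (k:ℤ) * δ3 * (δ3⁻¹ * B * δ3) := by group
  | pred k ih =>
    intro A hA
    obtain ⟨B, hB, hAB⟩ := ih A hA
    refine ⟨δ3 * B * δ3⁻¹, conj_mem B hB, ?_⟩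
    rw [zpow_sub_one]
    calc A * (δ3 ^ (-k:ℤ) * δ3⁻¹) = (A * δ3 ^ (-k:ℤ)) * δ3⁻¹ := by group
      _ = δ3 ^ (-k:ℤ) * B * δ3⁻¹ := by rw [hAB]
      _ = δ3 ^ (-k:ℤ) * δ3⁻¹ * (δ3 * B * δ3⁻¹) := by group

theorem inv_b21 : b21⁻¹ = δ3 ^ (-1:ℤ) * b32 := by
  simp only [δ3, b21, b31, b32, zpow_neg, zpow_one]; group

theorem inv_b32 : b32⁻¹ = δ3 ^ (-1:ℤ) * b31 := by
  simp only [δ3, b21, b31, b32, zpow_neg, zpow_one]; group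

theorem inv_b31 : b31⁻¹ = δ3 ^ (-1:ℤ) * b21 := by
  have h : b31 = δ3⁻¹ * b32 * δ3 := di_b32.symm
  rw [zpow_neg, zpow_one, h]
  have : (δ3⁻¹ * b32 * δ3)⁻¹ = δ3⁻¹ * b32⁻¹ * δ3 := by group
  rw [this, inv_b32, zpow_neg, zpow_one]
  have : δ3⁻¹ * (δ3⁻¹ * b31) * δ3 = δ3⁻¹ * (δ3⁻¹ * b31 * δ3) := by group
  rw [this, di_b31]

theorem inv_rep : ∀ A ∈ M, ∃ (k : ℤ) (B : B3), B ∈ M ∧ A⁻¹ = δ3 ^ k * B := by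
  intro A hA
  induction hA using Submonoid.closure_induction with
  | one => exact ⟨0, 1, M.one_mem, by simp⟩
  | mem x hx =>
    rcases hx with h | h | h <;> subst h
    · exact ⟨-1, b32, hb32, inv_b21⟩
    · exact ⟨-1, b21, hb21, inv_b31⟩
    · exact ⟨-1, b31, hb31, inv_b32⟩
  | mul x y hx hy ihx ihy =>
    obtain ⟨k, B, hB, hkB⟩ := ihy
    obtain ⟨m, C, hC, hmC⟩ := ihx
    obtain ⟨B', hB', hswap⟩ := swap m B hB
    refine ⟨k + m, B' * C, M.mul_mem hB' hC, ?_⟩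
    rw [mul_inv_rev, hkB, hmC, zpow_add]
    calc δ3 ^ k * B * (δ3 ^ m * C) = δ3 ^ k * (B * δ3 ^ m) * C := by group
      _ = δ3 ^ k * (δ3 ^ m * B') * C := by rw [hswap]
      _ = δ3 ^ k * δ3 ^ m * (B' * C) := by group

theorem exists_rep : ∀ g : B3, ∃ (k : ℤ) (A : B3), A ∈ M ∧ g = δ3 ^ k * A := by
  intro g
  have hg : g ∈ Subgroup.closure (Set.range (PresentedGroup.of : Fin 2 → B3)) := by
    rw [PresentedGroup.closure_range_of]; trivial
  induction hg using Subgroup.closure_induction with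
  | one => exact ⟨0, 1, M.one_mem, by simp⟩
  | mem x hx =>
    obtain ⟨i, rfl⟩ := hx
    fin_cases i
    · exact ⟨0, b21, hb21, by simp [b21, a1]⟩
    · exact ⟨0, b32, hb32, by simp [b32, a2]⟩
  | mul x y hx hy ihx ihy =>
    obtain ⟨k, A, hA, hkA⟩ := ihx
    obtain ⟨m, B, hB, hmB⟩ := ihy
    obtain ⟨A', hA', hswap⟩ := swap m A hA
    refine ⟨k + m, A' * B, M.mul_mem hA' hB, ?_⟩
    rw [hkA, hmB, zpow_add]
    calc δ3 ^ k * A * (δ3 ^ m * B) = δ3 ^ k * (A * δ3 ^ m) * B := by group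
      _ = δ3 ^ k * (δ3 ^ m * A') * B := by rw [hswap]
      _ = δ3 ^ k * δ3 ^ m * (A' * B) := by group
  | inv x hx ihx =>
    obtain ⟨k, A, hA, hkA⟩ := ihx
    obtain ⟨m, B, hB, hmB⟩ := inv_rep A hA
    obtain ⟨B', hB', hswap⟩ := swap (-k) B hB
    refine ⟨m + -k, B', hB', ?_⟩
    rw [hkA, mul_inv_rev, hmB, zpow_add]
    calc δ3 ^ m * B * (δ3 ^ k)⁻¹ = δ3 ^ m * (B * δ3 ^ (-k)) := by group
      _ = δ3 ^ m * (δ3 ^ (-k) * B') := by rw [hswap]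
      _ = δ3 ^ m * δ3 ^ (-k) * B' := by group

noncomputable def E : B3 →* Multiplicative ℤ :=
  PresentedGroup.toGroup (f := fun _ => Multiplicative.ofAdd (1:ℤ)) (by
    intro r hr
    simp only [braid3Rels, Set.mem_singleton_iff] at hr
    subst hr
    simp only [map_mul, map_inv, FreeGroup.lift_apply_of]
    group)

noncomputable def ε (g : B3) : ℤ := Multiplicative.toAdd (E g)

theorem ε_mul (x y : B3) : ε (x * y) = ε x + ε y := by
  simp [ε, map_mul]

theorem ε_a1 : ε a1 = 1 := by simp [ε, a1, E]
theorem ε_a2 : ε a2 = 1 := by simp [ε, a2, E]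

theorem ε_b21 : ε b21 = 1 := ε_a1
theorem ε_b32 : ε b32 = 1 := ε_a2
theorem ε_b31 : ε b31 = 1 := by
  have : ε a2⁻¹ = -1 := by simp [ε, a2, E]
  simp [b31, ε_mul, ε_a1, ε_a2, this]
theorem ε_δ3 : ε δ3 = 2 := by simp [δ3, ε_mul, ε_b21, ε_b32]

theorem ε_nonneg : ∀ A ∈ M, 0 ≤ ε A := by
  intro A hA
  induction hA using Submonoid.closure_induction with
  | one => simp [ε]
  | mem x hx => rcases hx with h | h | h <;> subst h <;>
      simp [ε_b21, ε_b31, ε_b32]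
  | mul x y hx hy ihx ihy => rw [ε_mul]; omega

theorem reduce : ∀ n : ℕ, ∀ A ∈ M, ε A ≤ n →
    ∃ (j : ℕ) (A' : B3), A' ∈ M ∧ A = δ3 ^ j * A' ∧ ∀ B ∈ M, A' ≠ δ3 * B := by
  intro n
  induction n with
  | zero =>
    intro A hA hle
    refine ⟨0, A, hA, by simp, ?_⟩
    intro B hB hAB
    have h1 := ε_nonneg B hB
    have h2 : ε A = 2 + ε B := by rw [hAB, ε_mul, ε_δ3]
    omega
  | succ n ih =>
    intro A hA hle
    by_cases h : ∃ B ∈ M, A = δ3 * B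
    · obtain ⟨B, hB, rfl⟩ := h
      have hεB : ε B ≤ n := by
        have h2 : ε (δ3 * B) = 2 + ε B := by rw [ε_mul, ε_δ3]
        omega
      obtain ⟨j, A', hA', heq, hmin⟩ := ih B hB hεB
      refine ⟨j + 1, A', hA', ?_, hmin⟩
      rw [heq, pow_succ']
      group
    · push_neg at h
      exact ⟨0, A, hA, by simp, h⟩

end B3aux

theorem B3_normal_form :
    ∀ g : B3, ∃ (k : ℤ) (A : B3),
      A ∈ Submonoid.closure {b21, b31, b32} ∧ g = δ3 ^ k * A ∧
      ∀ A' ∈ Submonoid.closure {b21, b31, b32}, A ≠ δ3 * A' := by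
  intro g
  obtain ⟨k, A, hA, rfl⟩ := B3aux.exists_rep g
  have h0 := B3aux.ε_nonneg A hA
  obtain ⟨j, A', hA', heq, hmin⟩ := B3aux.reduce (B3aux.ε A).toNat A hA
    (by rw [Int.toNat_of_nonneg h0])
  refine ⟨k + j, A', hA', ?_, hmin⟩
  rw [heq, zpow_add, zpow_natCast, mul_assoc]
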